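/- Let G be a k-connected, k-regular simple graph. If G admits ⌊k/2⌋ completely independent spanning trees, then ⌈(|V(G)| − 2)/⌈k/2⌉⌉ ≤ ⌊|V(G)|/⌊k/2⌋⌋. -/

import Mathlib

open SimpleGraph

/-- `T` is a spanning tree of `G`: a subgraph of `G` (on the same vertex set) that is a tree. -/
def IsSpanningTreeOf {V : Type*} (G T : SimpleGraph V) : Prop :=
  T ≤ G ∧ T.IsTree

/-- A family of spanning trees of `G` are *completely independent* if for every pair of
distinct vertices `x ≠ y` and distinct indices `i ≠ j`, the (unique) paths from `x` to `y`
in `T i` and `T j` share no edges, and share no vertices except `x` and `y`. -/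
def AreCISTs {V : Type*} {k : ℕ} (G : SimpleGraph V) (T : Fin k → SimpleGraph V) : Prop :=
  (∀ i, IsSpanningTreeOf G (T i)) ∧
  ∀ x y : V, x ≠ y → ∀ i j : Fin k, i ≠ j →
    ∀ p : (T i).Walk x y, ∀ q : (T j).Walk x y, p.IsPath → q.IsPath →
      (∀ e ∈ p.edges, e ∉ q.edges) ∧
      (∀ v ∈ p.support, v ∈ q.support → v = x ∨ v = y)

/-- The `n`-dimensional hypercube: vertices are functions `Fin n → ZMod 2`, adjacent iff
they differ in exactly one coordinate. -/
def hypercube (n : ℕ) : SimpleGraph (Fin n → ZMod 2) where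
  Adj x y := hammingDist x y = 1
  symm := ⟨fun x y h => by rwa [hammingDist_comm]⟩
  loopless := ⟨fun x h => by simp [hammingDist_self] at h⟩

/-- `G` is `k`-connected: it has more than `k` vertices and remains connected after
removing any set of fewer than `k` vertices. -/
def KConnected {V : Type*} (G : SimpleGraph V) (k : ℕ) : Prop :=
  k < Nat.card V ∧
  ∀ s : Finset V, s.card < k → ((G.induce ((↑s : Set V)ᶜ))).Connected

/-- `G` is `k`-regular: every vertex has exactly `k` neighbours. -/
def IsKRegular {V : Type*} (G : SimpleGraph V) (k : ℕ) : Prop :=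
  ∀ v : V, (G.neighborSet v).ncard = k

namespace CISTAux

variable {V : Type*}

/-- The graph `H` with all edges at `v` removed. -/
def del (H : SimpleGraph V) (v : V) : SimpleGraph V where
  Adj a b := H.Adj a b ∧ a ≠ v ∧ b ≠ v
  symm := ⟨fun _ _ h => ⟨h.1.symm, h.2.2, h.2.1⟩⟩
  loopless := ⟨fun a h => H.irrefl h.1⟩

lemma del_le (H : SimpleGraph V) (v : V) : del H v ≤ H := fun _ _ h => h.1

lemma del_not_mem_support {H : SimpleGraph V} {v : V} :
    ∀ {x y : V} (w : (del H v).Walk x y), x ≠ v → v ∉ w.support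
  | x, _, SimpleGraph.Walk.nil, hx => by simp [Ne.symm hx]
  | x, y, SimpleGraph.Walk.cons h p, hx => by
      simp only [SimpleGraph.Walk.support_cons, List.mem_cons, not_or]
      exact ⟨fun hv => hx hv.symm, del_not_mem_support p h.2.2⟩

lemma reachable_del_of_walk {H : SimpleGraph V} {v x y : V} (w : H.Walk x y)
    (hv : v ∉ w.support) : (del H v).Reachable x y := by
  refine ⟨w.transfer (del H v) ?_⟩
  intro e he
  induction e with
  | h a b =>
    rw [SimpleGraph.mem_edgeSet]
    exact ⟨w.adj_of_mem_edges he,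
      fun h => hv (h ▸ w.fst_mem_support_of_mem_edges he),
      fun h => hv (h ▸ w.snd_mem_support_of_mem_edges he)⟩

lemma mem_support_of_not_reachable_del {H : SimpleGraph V} {v x y : V}
    (hnr : ¬ (del H v).Reachable x y) (p : H.Walk x y) : v ∈ p.support := by
  by_contra hv; exact hnr (reachable_del_of_walk p hv)

lemma not_reachable_del [DecidableEq V] {H : SimpleGraph V} (hT : H.IsTree) {v a b : V}
    (ha : H.Adj v a) (hb : H.Adj v b) (hab : a ≠ b) :
    ¬ (del H v).Reachable a b := by
  rintro ⟨q⟩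
  have hv : v ∉ q.support := del_not_mem_support q ha.ne'
  let q' : H.Walk a b := q.transfer H
    (fun e he => (SimpleGraph.edgeSet_mono (del_le H v)) (q.edges_subset_edgeSet he))
  have hv' : v ∉ q'.support := by
    simpa only [q', SimpleGraph.Walk.support_transfer] using hv
  have hv1 : v ∉ q'.bypass.support := fun h => hv' (q'.support_bypass_subset h)
  let p2 : H.Walk a b :=
    SimpleGraph.Walk.cons ha.symm (SimpleGraph.Walk.cons hb SimpleGraph.Walk.nil)
  have hp2 : p2.IsPath := by
    simp [p2, SimpleGraph.Walk.isPath_def, ha.ne', hb.ne', hb.ne, hab]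
  have heq := (hT.existsUnique_path a b).unique q'.bypass_isPath hp2
  apply hv1
  rw [heq]
  simp [p2]

/-- A vertex cannot be "internal" (have two distinct tree-neighbours) in two
different completely independent spanning trees. -/
lemma internal_unique {k : ℕ} {G : SimpleGraph V} {T : Fin k → SimpleGraph V}
    (hT : AreCISTs G T) {i j : Fin k} (hij : i ≠ j) {v a b c d : V}
    (hai : (T i).Adj v a) (hbi : (T i).Adj v b) (hab : a ≠ b)
    (hcj : (T j).Adj v c) (hdj : (T j).Adj v d) (hcd : c ≠ d) : False := by
  classical
  have treei := (hT.1 i).2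
  have treej := (hT.1 j).2
  have dich : ∀ x y : V, x ≠ v → y ≠ v → x ≠ y →
      (del (T i) v).Reachable x y ∨ (del (T j) v).Reachable x y := by
    intro x y hx hy hxy
    by_contra hcon
    push_neg at hcon
    obtain ⟨hni, hnj⟩ := hcon
    obtain ⟨p0⟩ := treei.isConnected.preconnected x y
    obtain ⟨q0⟩ := treej.isConnected.preconnected x y
    have hvp : v ∈ p0.bypass.support := mem_support_of_not_reachable_del hni _
    have hvq : v ∈ q0.bypass.support := mem_support_of_not_reachable_del hnj _
    rcases (hT.2 x y hxy i j hij p0.bypass q0.bypass p0.bypass_isPath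
      q0.bypass_isPath).2 v hvp hvq with rfl | rfl
    · exact hx rfl
    · exact hy rfl
  have hnab : ¬ (del (T i) v).Reachable a b := not_reachable_del treei hai hbi hab
  have hncd : ¬ (del (T j) v).Reachable c d := not_reachable_del treej hcj hdj hcd
  obtain ⟨y0, hy0v, hny0⟩ : ∃ y0, y0 ≠ v ∧ ¬ (del (T j) v).Reachable a y0 := by
    by_cases h : (del (T j) v).Reachable a c
    · exact ⟨d, hdj.ne', fun h' => hncd (h.symm.trans h')⟩
    · exact ⟨c, hcj.ne', h⟩
  have hay0 : a ≠ y0 := by rintro rfl; exact hny0 (SimpleGraph.Reachable.refl a)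
  have hRiay0 : (del (T i) v).Reachable a y0 :=
    (dich a y0 hai.ne' hy0v hay0).resolve_right hny0
  have hRjab : (del (T j) v).Reachable a b :=
    (dich a b hai.ne' hbi.ne' hab).resolve_left hnab
  have hy0b : y0 ≠ b := by rintro rfl; exact hny0 hRjab
  rcases dich y0 b hy0v hbi.ne' hy0b with h | h
  · exact hnab (hRiay0.trans h)
  · exact hny0 (hRjab.trans h.symm)

end CISTAux

open CISTAux in
/-- (Pai et al.) Necessary condition for a `k`-connected, `k`-regular graph to admit
`⌊k/2⌋` completely independent spanning trees:
`⌈(|V| - 2) / ⌈k/2⌉⌉ ≤ ⌊|V| / ⌊k/2⌋⌋`. -/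
theorem cist_necessary_condition_regular {V : Type*} [Fintype V]
    (G : SimpleGraph V) (k : ℕ)
    (hconn : KConnected G k) (hreg : IsKRegular G k)
    (hcist : ∃ T : Fin (k / 2) → SimpleGraph V, AreCISTs G T) :
    ⌈((Fintype.card V : ℚ) - 2) / ((⌈(k : ℚ) / 2⌉ : ℤ) : ℚ)⌉ ≤
      ⌊((Fintype.card V : ℚ)) / ((⌊(k : ℚ) / 2⌋ : ℤ) : ℚ)⌋ := by
  classical
  set n := Fintype.card V with hn
  have hkn : k < n := by
    have h := hconn.1; rwa [Nat.card_eq_fintype_card] at h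
  rcases Nat.lt_or_ge k 2 with hk2 | hk2
  · interval_cases k
    · norm_num
    · -- k = 1 : show n = 2
      have hGconn : G.Connected := by
        have h := hconn.2 ∅ (by simp)
        rw [Finset.coe_empty, Set.compl_empty] at h
        exact (G.induceUnivIso).connected_iff.mp h
      obtain ⟨v⟩ : Nonempty V := Fintype.card_pos_iff.mp (by omega)
      obtain ⟨w, hw⟩ := Set.ncard_eq_one.mp (hreg v)
      have hvw : G.Adj v w := by
        have h : w ∈ G.neighborSet v := by rw [hw]; exact rfl
        exact h
      have hwv : G.neighborSet w = {v} := by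
        obtain ⟨u, hu⟩ := Set.ncard_eq_one.mp (hreg w)
        have hv' : v ∈ G.neighborSet w := hvw.symm
        rw [hu] at hv' ⊢
        rw [Set.mem_singleton_iff.mp hv']
      have hclosed : ∀ x y (p : G.Walk x y), x = v ∨ x = w → y = v ∨ y = w := by
        intro x y p
        induction p with
        | nil => exact id
        | @cons a b c h q ih =>
          intro hx
          apply ih
          rcases hx with h1 | h1
          · right
            have hmem : b ∈ G.neighborSet v := by rw [← h1]; exact h
            rw [hw] at hmem
            exact hmem
          · left
            have hmem : b ∈ G.neighborSet w := by rw [← h1]; exact h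
            rw [hwv] at hmem
            exact hmem
      have huniv : ∀ u : V, u = v ∨ u = w := fun u =>
        hclosed v u (hGconn.preconnected v u).some (Or.inl rfl)
      have hle2 : n ≤ 2 := by
        have hsub : (Finset.univ : Finset V) ⊆ {v, w} := fun u _ => by
          rcases huniv u with rfl | rfl <;> simp
        calc n = (Finset.univ : Finset V).card := (Finset.card_univ).symm
          _ ≤ ({v, w} : Finset V).card := Finset.card_le_card hsub
          _ ≤ 2 := le_trans (Finset.card_insert_le _ _) (by simp)
      have hne : n = 2 := by omega
      rw [hne]
      norm_num
  · -- main case k ≥ 2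
    set f := k / 2 with hfdef
    obtain ⟨T, hT⟩ := hcist
    have hf1 : 1 ≤ f := by omega
    set m := k - f with hmdef
    have hmf : f + m = k := by omega
    have hn2 : 2 ≤ n := by omega
    haveI : Nonempty V := Fintype.card_pos_iff.mp (by omega)
    have treele : ∀ i, T i ≤ G := fun i => (hT.1 i).1
    have tree : ∀ i, (T i).IsTree := fun i => (hT.1 i).2
    -- the trees are pairwise edge-disjoint
    have hED : ∀ i j : Fin f, i ≠ j → ∀ a b : V, (T i).Adj a b → ¬ (T j).Adj a b := by
      intro i j hij a b hab hab'
      have h := (hT.2 a b hab.ne i j hij (SimpleGraph.Path.singleton hab)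
        (SimpleGraph.Path.singleton hab') (SimpleGraph.Path.singleton hab).2
        (SimpleGraph.Path.singleton hab').2).1
      exact h s(a, b) (by simp [SimpleGraph.Path.singleton])
        (by simp [SimpleGraph.Path.singleton])
    have hdegG : ∀ v : V, G.degree v = k := by
      intro v
      rw [← hreg v, ← SimpleGraph.card_neighborFinset_eq_degree,
        SimpleGraph.neighborFinset_def, Set.ncard_eq_toFinset_card']
    have hdeg1 : ∀ (i : Fin f) (v : V), 1 ≤ (T i).degree v := by
      intro i v
      have hex : ∃ w, (T i).Adj v w := by
        obtain ⟨u, hu⟩ := Fintype.exists_ne_of_one_lt_card (by omega) v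
        obtain ⟨p⟩ := (tree i).isConnected.preconnected v u
        cases p with
        | nil => exact absurd rfl hu
        | cons h _ => exact ⟨_, h⟩
      exact (T i).degree_pos_iff_exists_adj v |>.mpr hex
    have hdegsum : ∀ v : V, ∑ i : Fin f, (T i).degree v ≤ k := by
      intro v
      have hdisj : ∀ i ∈ (Finset.univ : Finset (Fin f)), ∀ j ∈ Finset.univ, i ≠ j →
          Disjoint ((T i).neighborFinset v) ((T j).neighborFinset v) := by
        intro i _ j _ hij
        rw [Finset.disjoint_left]
        intro u hu hu'
        exact hED i j hij v u (by rwa [SimpleGraph.mem_neighborFinset] at hu)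
          (by rwa [SimpleGraph.mem_neighborFinset] at hu')
      calc ∑ i : Fin f, (T i).degree v
          = (Finset.univ.biUnion (fun i : Fin f => (T i).neighborFinset v)).card :=
            (Finset.card_biUnion hdisj).symm
        _ ≤ (G.neighborFinset v).card := Finset.card_le_card (by
            intro u hu
            simp only [Finset.mem_biUnion, SimpleGraph.mem_neighborFinset] at hu ⊢
            obtain ⟨i, _, hu⟩ := hu
            exact treele i hu)
        _ = k := hdegG v
    have hdegle : ∀ (i : Fin f) (v : V), (T i).degree v ≤ m + 1 := by
      intro i v
      have h1 : ∑ j : Fin f, (T j).degree v ≤ k := hdegsum v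
      have h2 : (T i).degree v + ∑ j ∈ Finset.univ.erase i, (T j).degree v
          = ∑ j : Fin f, (T j).degree v := by
        exact Finset.add_sum_erase Finset.univ (fun j => (T j).degree v) (Finset.mem_univ i)
      have h3 := Finset.card_nsmul_le_sum (Finset.univ.erase i)
        (fun j => (T j).degree v) 1 (fun j _ => hdeg1 j v)
      simp only [smul_eq_mul, mul_one] at h3
      have h4 : (Finset.univ.erase i).card = f - 1 := by
        rw [Finset.card_erase_of_mem (Finset.mem_univ i)]
        simp
      omega
    -- the sets of internal vertices
    set I : Fin f → Finset V :=
      (fun i => Finset.univ.filter (fun v => 2 ≤ (T i).degree v)) with hI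
    have hIdisj : ∀ i j : Fin f, i ≠ j → Disjoint (I i) (I j) := by
      intro i j hij
      rw [Finset.disjoint_left]
      intro v hv hv'
      simp only [hI, Finset.mem_filter] at hv hv'
      obtain ⟨a, ha, b, hb, hab⟩ := Finset.one_lt_card.mp
        (by rw [SimpleGraph.card_neighborFinset_eq_degree]; omega :
          1 < ((T i).neighborFinset v).card)
      obtain ⟨c, hc, d, hd, hcd⟩ := Finset.one_lt_card.mp
        (by rw [SimpleGraph.card_neighborFinset_eq_degree]; omega :
          1 < ((T j).neighborFinset v).card)
      exact internal_unique hT hij ((T i).mem_neighborFinset v a |>.mp ha)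
        ((T i).mem_neighborFinset v b |>.mp hb) hab
        ((T j).mem_neighborFinset v c |>.mp hc)
        ((T j).mem_neighborFinset v d |>.mp hd) hcd
    have hcount : ∀ i : Fin f, n - 2 ≤ (I i).card * m := by
      intro i
      have hsum : ∑ v : V, (T i).degree v = 2 * (n - 1) := by
        rw [SimpleGraph.sum_degrees_eq_twice_card_edges]
        have he := (tree i).card_edgeFinset
        omega
      have hsplit : ∑ v ∈ I i, (T i).degree v
          + ∑ v ∈ Finset.univ.filter (fun v => ¬ 2 ≤ (T i).degree v), (T i).degree v
          = ∑ v : V, (T i).degree v := by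
        simp only [hI]
        exact Finset.sum_filter_add_sum_filter_not _ _ _
      have h1 : ∑ v ∈ I i, (T i).degree v ≤ (I i).card • (m + 1) :=
        Finset.sum_le_card_nsmul _ _ _ (fun v _ => hdegle i v)
      have h2 : ∑ v ∈ Finset.univ.filter (fun v => ¬ 2 ≤ (T i).degree v), (T i).degree v
          ≤ (Finset.univ.filter (fun v => ¬ 2 ≤ (T i).degree v)).card • 1 :=
        Finset.sum_le_card_nsmul _ _ _ (fun v hv => by
          simp only [Finset.mem_filter] at hv
          omega)
      simp only [smul_eq_mul, mul_one] at h1 h2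
      have hcc : (I i).card + (Finset.univ.filter (fun v => ¬ 2 ≤ (T i).degree v)).card
          = n := by
        simp only [hI]
        rw [Finset.card_filter_add_card_filter_not]
        exact Finset.card_univ
      have hexp : (I i).card * (m + 1) = (I i).card * m + (I i).card := by ring
      rw [hexp] at h1
      obtain ⟨Q, hQ⟩ : ∃ Q, (I i).card * m = Q := ⟨_, rfl⟩
      rw [hQ] at h1 ⊢
      omega
    have hsumI : ∑ i : Fin f, (I i).card ≤ n := by
      rw [← Finset.card_biUnion (fun i _ j _ hij => hIdisj i j hij)]
      calc (Finset.univ.biUnion I).card ≤ (Finset.univ : Finset V).card :=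
            Finset.card_le_card (Finset.subset_univ _)
        _ = n := Finset.card_univ
    -- arithmetic conclusion
    have hfloor : ⌊(k : ℚ) / 2⌋ = (f : ℤ) := by
      rw [Int.floor_eq_iff]
      have h1 : 2 * (f : ℚ) ≤ k := by exact_mod_cast (by omega : 2 * (f : ℤ) ≤ k)
      have h2 : (k : ℚ) < 2 * (f : ℚ) + 2 := by
        exact_mod_cast (by omega : (k : ℤ) < 2 * f + 2)
      constructor
      · push_cast
        linarith
      · push_cast
        linarith
    have hceil : ⌈(k : ℚ) / 2⌉ = (m : ℤ) := by
      rw [Int.ceil_eq_iff]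
      have h1 : 2 * (m : ℚ) - 2 < k := by
        exact_mod_cast (by omega : 2 * (m : ℤ) - 2 < k)
      have h2 : (k : ℚ) ≤ 2 * (m : ℚ) := by exact_mod_cast (by omega : (k : ℤ) ≤ 2 * m)
      constructor
      · push_cast
        linarith
      · push_cast
        linarith
    set c : ℤ := ⌈((n : ℚ) - 2) / (m : ℚ)⌉ with hc
    have hm0 : (0 : ℚ) < (m : ℚ) := by exact_mod_cast (by omega : 0 < m)
    have hf0 : (0 : ℚ) < (f : ℚ) := by exact_mod_cast (by omega : 0 < f)
    have hcI : ∀ i : Fin f, c ≤ ((I i).card : ℤ) := by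
      intro i
      rw [hc, Int.ceil_le]
      rw [div_le_iff₀ hm0]
      have h := hcount i
      have hc2 : ((n - 2 : ℕ) : ℚ) ≤ (((I i).card * m : ℕ) : ℚ) := by exact_mod_cast h
      rw [Nat.cast_sub hn2] at hc2
      push_cast at hc2 ⊢
      linarith
    have hfc : (f : ℤ) * c ≤ (n : ℤ) := by
      calc (f : ℤ) * c = ∑ _i : Fin f, c := by
            simp [Finset.sum_const, Finset.card_univ, mul_comm]
        _ ≤ ∑ i : Fin f, ((I i).card : ℤ) := Finset.sum_le_sum (fun i _ => hcI i)
        _ = ((∑ i : Fin f, (I i).card : ℕ) : ℤ) := by push_cast; rfl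
        _ ≤ (n : ℤ) := by exact_mod_cast hsumI
    rw [hfloor, hceil]
    rw [Int.le_floor]
    push_cast
    rw [le_div_iff₀ hf0]
    rw [← hc]
    have hfc' := (@Int.cast_le ℚ _ _ _).mpr hfc
    push_cast at hfc'
    linarith
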